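/- arXiv:1807.07115 — 3 statements merged into one kernel-verified Lean document; each statement's English description precedes it below -/
import Mathlib

section
/- Let 0 < λ < μ, set a = λ − μ and let b > 0. Then the cell-mass matching condition ∫_k^{k+1} (−(a/b)) e^{(a/b)x} dx = (λ/μ)^k (1 − λ/μ) holds for every k ∈ ℕ if and only if b = (μ − λ)/(ln μ − ln λ). -/
open MeasureTheory

lemma integ_aux (c p q : ℝ) :
    (∫ x in p..q, -c * Real.exp (c * x)) = Real.exp (c * p) - Real.exp (c * q) := by
  have hderiv : ∀ x ∈ Set.uIcc p q, HasDerivAt (fun x => -Real.exp (c * x))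
      (-c * Real.exp (c * x)) x := by
    intro x _
    have h := (Real.hasDerivAt_exp (c * x)).comp x ((hasDerivAt_id x).const_mul c)
    have h2 : HasDerivAt (fun x => -Real.exp (c * x)) (-(Real.exp (c * x) * (c * 1))) x := h.neg
    convert h2 using 1
    ring
  rw [intervalIntegral.integral_eq_sub_of_hasDerivAt hderiv
    ((continuous_const.mul (Real.continuous_exp.comp
      (continuous_const.mul continuous_id))).intervalIntegrable p q)]
  ring

/-- Matching the cell masses of the stationary Smoluchowski density with the
stationary `M/M/1` distribution characterizes the diffusion coefficient as the
logarithmic mean `b = (μ − λ)/(ln μ − ln λ)`. -/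
theorem stmt_5 (lam mu b : ℝ) (h0 : 0 < lam) (h1 : lam < mu) (hb : 0 < b)
    (a : ℝ) (ha : a = lam - mu) :
    (∀ k : ℕ, (∫ x in (k : ℝ)..((k : ℝ) + 1), -(a / b) * Real.exp ((a / b) * x))
        = (lam / mu) ^ k * (1 - lam / mu)) ↔
      b = (mu - lam) / (Real.log mu - Real.log lam) := by
  have hmu : 0 < mu := h0.trans h1
  have hlog : Real.log lam < Real.log mu := Real.log_lt_log h0 h1
  have hD : Real.log mu - Real.log lam ≠ 0 := by linarith
  have hml : mu - lam ≠ 0 := by linarith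
  have hr : 0 < lam / mu := div_pos h0 hmu
  constructor
  · intro H
    have h := H 0
    rw [integ_aux] at h
    simp at h
    -- h : 1 - exp (a/b) = 1 - lam/mu  (roughly)
    have hexp : Real.exp (a / b) = lam / mu := by
      have := h
      nlinarith [this]
    have hab : a / b = Real.log lam - Real.log mu := by
      have := congrArg Real.log hexp
      rwa [Real.log_exp, Real.log_div (ne_of_gt h0) (ne_of_gt hmu)] at this
    rw [eq_div_iff hD]
    have hb' : b ≠ 0 := ne_of_gt hb
    field_simp at hab
    rw [ha] at hab
    linarith
  · intro hbeq k
    have hc : a / b = Real.log (lam / mu) := by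
      rw [ha, hbeq, Real.log_div (ne_of_gt h0) (ne_of_gt hmu)]
      field_simp
      ring
    rw [integ_aux, hc]
    have e1 : Real.exp (Real.log (lam / mu) * (k : ℝ)) = (lam / mu) ^ k := by
      rw [mul_comm, Real.exp_nat_mul, Real.exp_log hr]
    have e2 : Real.exp (Real.log (lam / mu) * ((k : ℝ) + 1))
        = (lam / mu) ^ k * (lam / mu) := by
      rw [mul_add, mul_one, Real.exp_add, e1, Real.exp_log hr]
    rw [e1, e2]
    ring
end

section
/- Let a ∈ ℝ, b > 0 and x₀ ≥ 0, and let ρ^F be the Smoluchowski fundamental solution on the half-line with these parameters. Then for all x > 0 and t > 0, ∂_t ρ^F(x,t) + a ∂_x ρ^F(x,t) − b ∂_xx ρ^F(x,t) = 0. -/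
open MeasureTheory Set

lemma hasDerivAt_invsqrt (c : ℝ) (hc : 0 < c) {t : ℝ} (ht : 0 < t) :
    HasDerivAt (fun τ : ℝ => (Real.sqrt (c * τ))⁻¹) (-(Real.sqrt (c * t))⁻¹ / (2 * t)) t := by
  have hct : 0 < c * t := mul_pos hc ht
  have hs : Real.sqrt (c * t) ≠ 0 := ne_of_gt (Real.sqrt_pos.2 hct)
  have h1 : HasDerivAt (fun τ : ℝ => c * τ) c t := by
    simpa using (hasDerivAt_id t).const_mul c
  have h2 : HasDerivAt (fun τ : ℝ => Real.sqrt (c * τ)) (c / (2 * Real.sqrt (c * t))) t :=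
    h1.sqrt (ne_of_gt hct)
  have h3 := h2.inv hs
  refine h3.congr_deriv ?_
  rw [Real.sq_sqrt hct.le]
  field_simp

lemma hasDerivAt_EIoi (u : ℝ) :
    HasDerivAt (fun v : ℝ => ∫ y in Ioi v, Real.exp (-y ^ 2)) (-Real.exp (-u ^ 2)) u := by
  have hint : Integrable (fun y : ℝ => Real.exp (-y ^ 2)) := by
    simpa using integrable_exp_neg_mul_sq (one_pos : (0:ℝ) < 1)
  have hcont : Continuous (fun y : ℝ => Real.exp (-y ^ 2)) := by continuity
  have key : ∀ v w : ℝ, v ≤ w →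
      (∫ y in Ioi v, Real.exp (-y ^ 2))
        = (∫ y in Ioc v w, Real.exp (-y ^ 2)) + ∫ y in Ioi w, Real.exp (-y ^ 2) := by
    intro v w hvw
    rw [← Ioc_union_Ioi_eq_Ioi hvw, setIntegral_union (Ioc_disjoint_Ioi le_rfl)
      measurableSet_Ioi hint.integrableOn hint.integrableOn]
  have hEeq : ∀ v : ℝ, (∫ y in Ioi v, Real.exp (-y ^ 2))
      = (∫ y in Ioi (0:ℝ), Real.exp (-y ^ 2)) - ∫ y in (0:ℝ)..v, Real.exp (-y ^ 2) := by
    intro v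
    rcases le_total 0 v with h | h
    · rw [key 0 v h, intervalIntegral.integral_of_le h]
      ring
    · rw [key v 0 h, intervalIntegral.integral_symm, intervalIntegral.integral_of_le h]
      ring
  have h1 : HasDerivAt (fun v : ℝ => ∫ y in (0:ℝ)..v, Real.exp (-y ^ 2)) (Real.exp (-u ^ 2)) u :=
    intervalIntegral.integral_hasDerivAt_right (hcont.intervalIntegrable 0 u)
      (hcont.stronglyMeasurableAtFilter _ _) hcont.continuousAt
  have h2 := h1.const_sub (∫ y in Ioi (0:ℝ), Real.exp (-y ^ 2))
  exact h2.congr_of_eventuallyEq (Filter.Eventually.of_forall hEeq)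

/-- The Smoluchowski fundamental solution on the half-line with drift `a`,
diffusion `b` and initial point `x₀`. -/
noncomputable def smolFund (a b x₀ : ℝ) (x t : ℝ) : ℝ :=
  (Real.sqrt (4 * Real.pi * b * t))⁻¹ * Real.exp (-(x - x₀ - a * t) ^ 2 / (4 * b * t))
  + (Real.sqrt (4 * Real.pi * b * t))⁻¹ *
      Real.exp (-(a / b) * x₀ - (x + x₀ - a * t) ^ 2 / (4 * b * t))
  - a / (2 * b) * Real.exp ((a / b) * x) *
      ((2 / Real.sqrt Real.pi) *
        ∫ y in Ioi ((x + x₀ + a * t) / Real.sqrt (4 * b * t)), Real.exp (-y ^ 2))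


set_option maxHeartbeats 2000000 in
/-- The Smoluchowski fundamental solution satisfies the drift-diffusion PDE
`ρ_t + a ρ_x − b ρ_xx = 0` for `x > 0`, `t > 0`. -/
theorem stmt_6 (a b x₀ : ℝ) (hb : 0 < b) (hx₀ : 0 ≤ x₀) :
    ∀ x > (0:ℝ), ∀ t > (0:ℝ),
      deriv (fun τ => smolFund a b x₀ x τ) t
        + a * deriv (fun ξ => smolFund a b x₀ ξ t) x
        - b * deriv (deriv (fun ξ => smolFund a b x₀ ξ t)) x = 0 := by
  intro x hx t ht
  have hπ := Real.pi_pos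
  have hbt : (0:ℝ) < 4*b*t := by positivity
  have hpbt : (0:ℝ) < 4*Real.pi*b*t := by positivity
  have hS : (0:ℝ) < Real.sqrt (4*b*t) := Real.sqrt_pos.2 hbt
  have hP : (0:ℝ) < Real.sqrt (4*Real.pi*b*t) := Real.sqrt_pos.2 hpbt
  have hQ : (0:ℝ) < Real.sqrt Real.pi := Real.sqrt_pos.2 hπ
  -- time derivative
  have hden : HasDerivAt (fun τ : ℝ => 4*b*τ) (4*b) t := by
    simpa using (hasDerivAt_id t).const_mul (4*b)
  have hX1 : HasDerivAt (fun τ : ℝ => x - x₀ - a*τ) (-a) t := by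
    simpa using (((hasDerivAt_id t).const_mul a).const_sub (x - x₀))
  have hnum1 : HasDerivAt (fun τ : ℝ => -(x - x₀ - a*τ)^2) (2*a*(x - x₀ - a*t)) t := by
    have h := (hX1.pow 2).neg
    refine h.congr_deriv ?_
    push_cast
    ring
  have he1t : HasDerivAt (fun τ : ℝ => -(x - x₀ - a*τ)^2/(4*b*τ)) ((2*a*(x - x₀ - a*t) * (4*b*t) - -(x - x₀ - a*t)^2 * (4*b)) / (4*b*t)^2) t :=
    hnum1.div hden (ne_of_gt hbt)
  have hN : HasDerivAt (fun τ : ℝ => (Real.sqrt (4*Real.pi*b*τ))⁻¹)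
      (-(Real.sqrt (4*Real.pi*b*t))⁻¹ / (2*t)) t := hasDerivAt_invsqrt (4*Real.pi*b) (by positivity) ht
  have hg1t : HasDerivAt (fun τ : ℝ => (Real.sqrt (4*Real.pi*b*τ))⁻¹ * Real.exp (-(x - x₀ - a*τ)^2/(4*b*τ)))
      (-(Real.sqrt (4*Real.pi*b*t))⁻¹ / (2*t) * Real.exp (-(x - x₀ - a*t)^2/(4*b*t)) + (Real.sqrt (4*Real.pi*b*t))⁻¹ * (Real.exp (-(x - x₀ - a*t)^2/(4*b*t)) * ((2*a*(x - x₀ - a*t) * (4*b*t) - -(x - x₀ - a*t)^2 * (4*b)) / (4*b*t)^2))) t := hN.mul he1t.exp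
  have hX2 : HasDerivAt (fun τ : ℝ => x + x₀ - a*τ) (-a) t := by
    simpa using (((hasDerivAt_id t).const_mul a).const_sub (x + x₀))
  have hnum2 : HasDerivAt (fun τ : ℝ => (x + x₀ - a*τ)^2) (-(2*a*(x + x₀ - a*t))) t := by
    have h := hX2.pow 2
    refine h.congr_deriv ?_
    push_cast
    ring
  have hq2 : HasDerivAt (fun τ : ℝ => (x + x₀ - a*τ)^2/(4*b*τ))
      ((-(2*a*(x + x₀ - a*t)) * (4*b*t) - (x + x₀ - a*t)^2 * (4*b)) / (4*b*t)^2) t :=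
    hnum2.div hden (ne_of_gt hbt)
  have he2t : HasDerivAt (fun τ : ℝ => -(a/b)*x₀ - (x + x₀ - a*τ)^2/(4*b*τ)) (-((-(2*a*(x + x₀ - a*t)) * (4*b*t) - (x + x₀ - a*t)^2 * (4*b)) / (4*b*t)^2)) t :=
    hq2.const_sub (-(a/b)*x₀)
  have hg2t : HasDerivAt (fun τ : ℝ => (Real.sqrt (4*Real.pi*b*τ))⁻¹ * Real.exp (-(a/b)*x₀ - (x + x₀ - a*τ)^2/(4*b*τ)))
      (-(Real.sqrt (4*Real.pi*b*t))⁻¹ / (2*t) * Real.exp (-(a/b)*x₀ - (x + x₀ - a*t)^2/(4*b*t)) + (Real.sqrt (4*Real.pi*b*t))⁻¹ * (Real.exp (-(a/b)*x₀ - (x + x₀ - a*t)^2/(4*b*t)) * (-((-(2*a*(x + x₀ - a*t)) * (4*b*t) - (x + x₀ - a*t)^2 * (4*b)) / (4*b*t)^2)))) t := hN.mul he2t.exp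
  have hW : HasDerivAt (fun τ : ℝ => x + x₀ + a*τ) a t := by
    simpa using (((hasDerivAt_id t).const_mul a).const_add (x + x₀))
  have hsq : HasDerivAt (fun τ : ℝ => Real.sqrt (4*b*τ)) (4*b / (2 * Real.sqrt (4*b*t))) t :=
    hden.sqrt (ne_of_gt hbt)
  have hw : HasDerivAt (fun τ : ℝ => (x + x₀ + a*τ)/Real.sqrt (4*b*τ)) ((a * Real.sqrt (4*b*t) - (x + x₀ + a*t) * (4*b / (2 * Real.sqrt (4*b*t)))) / Real.sqrt (4*b*t) ^ 2) t := hW.div hsq (ne_of_gt hS)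
  have hEw : HasDerivAt (fun τ : ℝ => ∫ y in Ioi ((x + x₀ + a*τ)/Real.sqrt (4*b*τ)), Real.exp (-y^2)) (-Real.exp (-((x + x₀ + a*t)/Real.sqrt (4*b*t))^2) * ((a * Real.sqrt (4*b*t) - (x + x₀ + a*t) * (4*b / (2 * Real.sqrt (4*b*t)))) / Real.sqrt (4*b*t) ^ 2)) t :=
    (hasDerivAt_EIoi _).comp t hw
  have hg3t : HasDerivAt
      (fun τ : ℝ => a/(2*b) * Real.exp ((a/b)*x) * (2/Real.sqrt Real.pi * (∫ y in Ioi ((x + x₀ + a*τ)/Real.sqrt (4*b*τ)), Real.exp (-y^2))))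
      (a/(2*b) * Real.exp ((a/b)*x) * (2/Real.sqrt Real.pi * (-Real.exp (-((x + x₀ + a*t)/Real.sqrt (4*b*t))^2) * ((a * Real.sqrt (4*b*t) - (x + x₀ + a*t) * (4*b / (2 * Real.sqrt (4*b*t)))) / Real.sqrt (4*b*t) ^ 2)))) t :=
    (hEw.const_mul (2/Real.sqrt Real.pi)).const_mul (a/(2*b) * Real.exp ((a/b)*x))
  have hT : HasDerivAt (fun τ : ℝ => (Real.sqrt (4*Real.pi*b*τ))⁻¹ * Real.exp (-(x - x₀ - a*τ)^2/(4*b*τ)) + (Real.sqrt (4*Real.pi*b*τ))⁻¹ * Real.exp (-(a/b)*x₀ - (x + x₀ - a*τ)^2/(4*b*τ)) - a/(2*b) * Real.exp ((a/b)*x) * (2/Real.sqrt Real.pi * (∫ y in Ioi ((x + x₀ + a*τ)/Real.sqrt (4*b*τ)), Real.exp (-y^2)))) (-(Real.sqrt (4*Real.pi*b*t))⁻¹ / (2*t) * Real.exp (-(x - x₀ - a*t)^2/(4*b*t)) + (Real.sqrt (4*Real.pi*b*t))⁻¹ * (Real.exp (-(x - x₀ - a*t)^2/(4*b*t)) * ((2*a*(x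 - x₀ - a*t) * (4*b*t) - -(x - x₀ - a*t)^2 * (4*b)) / (4*b*t)^2)) + (-(Real.sqrt (4*Real.pi*b*t))⁻¹ / (2*t) * Real.exp (-(a/b)*x₀ - (x + x₀ - a*t)^2/(4*b*t)) + (Real.sqrt (4*Real.pi*b*t))⁻¹ * (Real.exp (-(a/b)*x₀ - (x + x₀ - a*t)^2/(4*b*t)) * (-((-(2*a*(x + x₀ - a*t)) * (4*b*t) - (x + x₀ - a*t)^2 * (4*b)) / (4*b*t)^2)))) - (a/(2*b) * Real.exp ((a/b)*x) * (2/Real.sqrt Real.pi * (-Real.exp (-((x + x₀ + a*t)/Real.sqrt (4*b*t))^2) * ((a * Real.sqrt (4*b*t) - (x + x₀ + a*t) * (4*b / (2 * Real.sqrt (4*b*t)))) / Real.sqrt (4*b*t) ^ 2))))) t := (hg1t.add hg2t).sub hg3t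
  -- first space derivative (at every point)
  have hFx : ∀ ξ : ℝ, HasDerivAt (fun ξ : ℝ => (Real.sqrt (4*Real.pi*b*t))⁻¹ * Real.exp (-(ξ - x₀ - a*t)^2/(4*b*t)) + (Real.sqrt (4*Real.pi*b*t))⁻¹ * Real.exp (-(a/b)*x₀ - (ξ + x₀ - a*t)^2/(4*b*t)) - a/(2*b) * Real.exp ((a/b)*ξ) * (2/Real.sqrt Real.pi * (∫ y in Ioi ((ξ + x₀ + a*t)/Real.sqrt (4*b*t)), Real.exp (-y^2)))) ((Real.sqrt (4*Real.pi*b*t))⁻¹ * (Real.exp (-(ξ - x₀ - a*t)^2/(4*b*t)) * (-(ξ - x₀ - a*t)/(2*b*t))) + (Real.sqrt (4*Real.pi*b*t))⁻¹ * (Real.exp (-(a/b)*x₀ - (ξ + x₀ - a*t)^2/(4*b*t)) * (-((ξ + x₀ - a*t)/(2*b*t)))) - (a/(2*b) * (Real.exp ((a/b)*ξ) * (a/b)) * (2/Real.sqrt Real.pi * (∫ y in Ioi ((ξ + x₀ + a*t)/Real.sqrt (4*b*t)), Real.exp (-y^2))) + a/(2*b) * Real.exp ((a/b)*ξ) * (2/Real.sqrt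 Real.pi * (-Real.exp (-((ξ + x₀ + a*t)/Real.sqrt (4*b*t))^2) * (1/Real.sqrt (4*b*t)))))) ξ := by
    intro ξ
    have he1x : HasDerivAt (fun ξ : ℝ => -(ξ - x₀ - a*t)^2/(4*b*t)) (-(ξ - x₀ - a*t)/(2*b*t)) ξ := by
      have h := ((((hasDerivAt_id ξ).sub_const x₀).sub_const (a*t)).pow 2).neg.div_const (4*b*t)
      refine h.congr_deriv ?_
      push_cast [id]
      field_simp
      ring
    have hg1x : HasDerivAt (fun ξ : ℝ => (Real.sqrt (4*Real.pi*b*t))⁻¹ * Real.exp (-(ξ - x₀ - a*t)^2/(4*b*t)))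
        ((Real.sqrt (4*Real.pi*b*t))⁻¹ * (Real.exp (-(ξ - x₀ - a*t)^2/(4*b*t)) * (-(ξ - x₀ - a*t)/(2*b*t)))) ξ :=
      he1x.exp.const_mul _
    have he2x : HasDerivAt (fun ξ : ℝ => -(a/b)*x₀ - (ξ + x₀ - a*t)^2/(4*b*t)) (-((ξ + x₀ - a*t)/(2*b*t))) ξ := by
      have h := (((((hasDerivAt_id ξ).add_const x₀).sub_const (a*t)).pow 2).div_const
        (4*b*t)).const_sub (-(a/b)*x₀)
      refine h.congr_deriv ?_
      push_cast [id]
      field_simp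
      ring
    have hg2x : HasDerivAt (fun ξ : ℝ => (Real.sqrt (4*Real.pi*b*t))⁻¹ * Real.exp (-(a/b)*x₀ - (ξ + x₀ - a*t)^2/(4*b*t)))
        ((Real.sqrt (4*Real.pi*b*t))⁻¹ * (Real.exp (-(a/b)*x₀ - (ξ + x₀ - a*t)^2/(4*b*t)) * (-((ξ + x₀ - a*t)/(2*b*t))))) ξ :=
      he2x.exp.const_mul _
    have hek : HasDerivAt (fun ξ : ℝ => Real.exp ((a/b)*ξ)) (Real.exp ((a/b)*ξ) * (a/b)) ξ := by
      simpa using ((hasDerivAt_id ξ).const_mul (a/b)).exp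
    have hu : HasDerivAt (fun ξ : ℝ => a/(2*b) * Real.exp ((a/b)*ξ))
        (a/(2*b) * (Real.exp ((a/b)*ξ) * (a/b))) ξ := hek.const_mul _
    have hwx : HasDerivAt (fun ξ : ℝ => (ξ + x₀ + a*t)/Real.sqrt (4*b*t)) (1/Real.sqrt (4*b*t)) ξ := by
      simpa using (((hasDerivAt_id ξ).add_const x₀).add_const (a*t)).div_const (Real.sqrt (4*b*t))
    have hEx : HasDerivAt (fun ξ : ℝ => ∫ y in Ioi ((ξ + x₀ + a*t)/Real.sqrt (4*b*t)), Real.exp (-y^2))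
        (-Real.exp (-((ξ + x₀ + a*t)/Real.sqrt (4*b*t))^2) * (1/Real.sqrt (4*b*t))) ξ := (hasDerivAt_EIoi _).comp ξ hwx
    have hv : HasDerivAt (fun ξ : ℝ => 2/Real.sqrt Real.pi * (∫ y in Ioi ((ξ + x₀ + a*t)/Real.sqrt (4*b*t)), Real.exp (-y^2)))
        (2/Real.sqrt Real.pi * (-Real.exp (-((ξ + x₀ + a*t)/Real.sqrt (4*b*t))^2) * (1/Real.sqrt (4*b*t)))) ξ := hEx.const_mul _
    have hg3x : HasDerivAt
        (fun ξ : ℝ => a/(2*b) * Real.exp ((a/b)*ξ) * (2/Real.sqrt Real.pi * (∫ y in Ioi ((ξ + x₀ + a*t)/Real.sqrt (4*b*t)), Real.exp (-y^2))))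
        (a/(2*b) * (Real.exp ((a/b)*ξ) * (a/b)) * (2/Real.sqrt Real.pi * (∫ y in Ioi ((ξ + x₀ + a*t)/Real.sqrt (4*b*t)), Real.exp (-y^2)))
          + a/(2*b) * Real.exp ((a/b)*ξ) * (2/Real.sqrt Real.pi * (-Real.exp (-((ξ + x₀ + a*t)/Real.sqrt (4*b*t))^2) * (1/Real.sqrt (4*b*t))))) ξ :=
      hu.mul hv
    exact (hg1x.add hg2x).sub hg3x
  -- second space derivative
  have hFxx : HasDerivAt (fun ξ : ℝ => (Real.sqrt (4*Real.pi*b*t))⁻¹ * (Real.exp (-(ξ - x₀ - a*t)^2/(4*b*t)) * (-(ξ - x₀ - a*t)/(2*b*t))) + (Real.sqrt (4*Real.pi*b*t))⁻¹ * (Real.exp (-(a/b)*x₀ - (ξ + x₀ - a*t)^2/(4*b*t)) * (-((ξ + x₀ - a*t)/(2*b*t)))) - (a/(2*b) * (Real.exp ((a/b)*ξ) * (a/b)) * (2/Real.sqrt Real.pi * (∫ y in Ioi ((ξ + x₀ + a*t)/Real.sqrt (4*b*t)), Real.exp (-y^2))) + a/(2*b) * Real.exp ((a/b)*ξ) * (2/Real.sqrt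 Real.pi * (-Real.exp (-((ξ + x₀ + a*t)/Real.sqrt (4*b*t))^2) * (1/Real.sqrt (4*b*t)))))) ((Real.sqrt (4*Real.pi*b*t))⁻¹ * (Real.exp (-(x - x₀ - a*t)^2/(4*b*t)) * (-(x - x₀ - a*t)/(2*b*t)) * (-(x - x₀ - a*t)/(2*b*t)) + Real.exp (-(x - x₀ - a*t)^2/(4*b*t)) * (-1/(2*b*t))) + ((Real.sqrt (4*Real.pi*b*t))⁻¹ * (Real.exp (-(a/b)*x₀ - (x + x₀ - a*t)^2/(4*b*t)) * (-((x + x₀ - a*t)/(2*b*t))) * (-((x + x₀ - a*t)/(2*b*t))) + Real.exp (-(a/b)*x₀ - (x + x₀ - a*t)^2/(4*b*t)) * (-1/(2*b*t)))) - ((a/(2*b) * (Real.exp ((a/b)*x) * (a/b) * (a/b)) * (2/Real.sqrt Real.pi * (∫ y in Ioi ((x + x₀ + a*t)/Real.sqrt (4*b*t)), Real.exp (-y^2))) + a/(2*b) * (Real.exp ((a/b)*x) * (a/b)) * (2/Real.sqrt Real.pi * (-Real.exp (-((x + x₀ + a*t)/Real.sqrt (4*b*t))^2) * (1/Real.sqrt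 (4*b*t))))) + (a/(2*b) * (Real.exp ((a/b)*x) * (a/b)) * (2/Real.sqrt Real.pi * (-Real.exp (-((x + x₀ + a*t)/Real.sqrt (4*b*t))^2) * (1/Real.sqrt (4*b*t)))) + a/(2*b) * Real.exp ((a/b)*x) * (2/Real.sqrt Real.pi * (-(Real.exp (-((x + x₀ + a*t)/Real.sqrt (4*b*t))^2) * (-(2*(((x + x₀ + a*t)/Real.sqrt (4*b*t))) * (1/Real.sqrt (4*b*t))))) * (1/Real.sqrt (4*b*t))))))) x := by
    have hL1 : HasDerivAt (fun ξ : ℝ => -(ξ - x₀ - a*t)/(2*b*t)) (-1/(2*b*t)) x := by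
      simpa using ((((hasDerivAt_id x).sub_const x₀).sub_const (a*t)).neg).div_const (2*b*t)
    have he1x : HasDerivAt (fun ξ : ℝ => -(ξ - x₀ - a*t)^2/(4*b*t)) (-(x - x₀ - a*t)/(2*b*t)) x := by
      have h := ((((hasDerivAt_id x).sub_const x₀).sub_const (a*t)).pow 2).neg.div_const (4*b*t)
      refine h.congr_deriv ?_
      push_cast [id]
      field_simp
      ring
    have hp1 : HasDerivAt
        (fun ξ : ℝ => (Real.sqrt (4*Real.pi*b*t))⁻¹ * (Real.exp (-(ξ - x₀ - a*t)^2/(4*b*t)) * (-(ξ - x₀ - a*t)/(2*b*t))))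
        ((Real.sqrt (4*Real.pi*b*t))⁻¹ * (Real.exp (-(x - x₀ - a*t)^2/(4*b*t)) * (-(x - x₀ - a*t)/(2*b*t)) * (-(x - x₀ - a*t)/(2*b*t)) + Real.exp (-(x - x₀ - a*t)^2/(4*b*t)) * (-1/(2*b*t)))) x := (he1x.exp.mul hL1).const_mul _
    have hL2 : HasDerivAt (fun ξ : ℝ => -((ξ + x₀ - a*t)/(2*b*t))) (-1/(2*b*t)) x := by
      have h := ((((hasDerivAt_id x).add_const x₀).sub_const (a*t)).div_const (2*b*t)).neg
      refine h.congr_deriv ?_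
      ring
    have he2x : HasDerivAt (fun ξ : ℝ => -(a/b)*x₀ - (ξ + x₀ - a*t)^2/(4*b*t)) (-((x + x₀ - a*t)/(2*b*t))) x := by
      have h := (((((hasDerivAt_id x).add_const x₀).sub_const (a*t)).pow 2).div_const
        (4*b*t)).const_sub (-(a/b)*x₀)
      refine h.congr_deriv ?_
      push_cast [id]
      field_simp
      ring
    have hp2 : HasDerivAt
        (fun ξ : ℝ => (Real.sqrt (4*Real.pi*b*t))⁻¹ * (Real.exp (-(a/b)*x₀ - (ξ + x₀ - a*t)^2/(4*b*t)) * (-((ξ + x₀ - a*t)/(2*b*t)))))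
        ((Real.sqrt (4*Real.pi*b*t))⁻¹ * (Real.exp (-(a/b)*x₀ - (x + x₀ - a*t)^2/(4*b*t)) * (-((x + x₀ - a*t)/(2*b*t))) * (-((x + x₀ - a*t)/(2*b*t))) + Real.exp (-(a/b)*x₀ - (x + x₀ - a*t)^2/(4*b*t)) * (-1/(2*b*t)))) x := (he2x.exp.mul hL2).const_mul _
    have hek : HasDerivAt (fun ξ : ℝ => Real.exp ((a/b)*ξ)) (Real.exp ((a/b)*x) * (a/b)) x := by
      simpa using ((hasDerivAt_id x).const_mul (a/b)).exp
    have hu2 : HasDerivAt (fun ξ : ℝ => a/(2*b) * (Real.exp ((a/b)*ξ) * (a/b)))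
        (a/(2*b) * (Real.exp ((a/b)*x) * (a/b) * (a/b))) x := (hek.mul_const (a/b)).const_mul _
    have hwx : HasDerivAt (fun ξ : ℝ => (ξ + x₀ + a*t)/Real.sqrt (4*b*t)) (1/Real.sqrt (4*b*t)) x := by
      simpa using (((hasDerivAt_id x).add_const x₀).add_const (a*t)).div_const (Real.sqrt (4*b*t))
    have hEx : HasDerivAt (fun ξ : ℝ => ∫ y in Ioi ((ξ + x₀ + a*t)/Real.sqrt (4*b*t)), Real.exp (-y^2))
        (-Real.exp (-((x + x₀ + a*t)/Real.sqrt (4*b*t))^2) * (1/Real.sqrt (4*b*t))) x := (hasDerivAt_EIoi _).comp x hwx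
    have hv : HasDerivAt (fun ξ : ℝ => 2/Real.sqrt Real.pi * (∫ y in Ioi ((ξ + x₀ + a*t)/Real.sqrt (4*b*t)), Real.exp (-y^2)))
        (2/Real.sqrt Real.pi * (-Real.exp (-((x + x₀ + a*t)/Real.sqrt (4*b*t))^2) * (1/Real.sqrt (4*b*t)))) x := hEx.const_mul _
    have hA : HasDerivAt
        (fun ξ : ℝ => a/(2*b) * (Real.exp ((a/b)*ξ) * (a/b)) * (2/Real.sqrt Real.pi * (∫ y in Ioi ((ξ + x₀ + a*t)/Real.sqrt (4*b*t)), Real.exp (-y^2))))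
        (a/(2*b) * (Real.exp ((a/b)*x) * (a/b) * (a/b)) * (2/Real.sqrt Real.pi * (∫ y in Ioi ((x + x₀ + a*t)/Real.sqrt (4*b*t)), Real.exp (-y^2))) + a/(2*b) * (Real.exp ((a/b)*x) * (a/b)) * (2/Real.sqrt Real.pi * (-Real.exp (-((x + x₀ + a*t)/Real.sqrt (4*b*t))^2) * (1/Real.sqrt (4*b*t))))) x := hu2.mul hv
    have hw2 : HasDerivAt (fun ξ : ℝ => -((ξ + x₀ + a*t)/Real.sqrt (4*b*t))^2)
        (-(2*(((x + x₀ + a*t)/Real.sqrt (4*b*t))) * (1/Real.sqrt (4*b*t)))) x := by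
      have h := (hwx.pow 2).neg
      refine h.congr_deriv ?_
      push_cast
      ring
    have hv2 : HasDerivAt
        (fun ξ : ℝ => 2/Real.sqrt Real.pi * (-Real.exp (-((ξ + x₀ + a*t)/Real.sqrt (4*b*t))^2) * (1/Real.sqrt (4*b*t))))
        (2/Real.sqrt Real.pi * (-(Real.exp (-((x + x₀ + a*t)/Real.sqrt (4*b*t))^2) * (-(2*(((x + x₀ + a*t)/Real.sqrt (4*b*t))) * (1/Real.sqrt (4*b*t))))) * (1/Real.sqrt (4*b*t)))) x := ((hw2.exp.neg).mul_const (1/Real.sqrt (4*b*t))).const_mul _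
    have hu : HasDerivAt (fun ξ : ℝ => a/(2*b) * Real.exp ((a/b)*ξ))
        (a/(2*b) * (Real.exp ((a/b)*x) * (a/b))) x := hek.const_mul _
    have hB : HasDerivAt
        (fun ξ : ℝ => a/(2*b) * Real.exp ((a/b)*ξ) * (2/Real.sqrt Real.pi * (-Real.exp (-((ξ + x₀ + a*t)/Real.sqrt (4*b*t))^2) * (1/Real.sqrt (4*b*t)))))
        (a/(2*b) * (Real.exp ((a/b)*x) * (a/b)) * (2/Real.sqrt Real.pi * (-Real.exp (-((x + x₀ + a*t)/Real.sqrt (4*b*t))^2) * (1/Real.sqrt (4*b*t)))) + a/(2*b) * Real.exp ((a/b)*x) * (2/Real.sqrt Real.pi * (-(Real.exp (-((x + x₀ + a*t)/Real.sqrt (4*b*t))^2) * (-(2*(((x + x₀ + a*t)/Real.sqrt (4*b*t))) * (1/Real.sqrt (4*b*t))))) * (1/Real.sqrt (4*b*t))))) x := hu.mul hv2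
    exact (hp1.add hp2).sub (hA.add hB)
  have hfeq : deriv (fun ξ : ℝ => (Real.sqrt (4*Real.pi*b*t))⁻¹ * Real.exp (-(ξ - x₀ - a*t)^2/(4*b*t)) + (Real.sqrt (4*Real.pi*b*t))⁻¹ * Real.exp (-(a/b)*x₀ - (ξ + x₀ - a*t)^2/(4*b*t)) - a/(2*b) * Real.exp ((a/b)*ξ) * (2/Real.sqrt Real.pi * (∫ y in Ioi ((ξ + x₀ + a*t)/Real.sqrt (4*b*t)), Real.exp (-y^2)))) = fun ξ : ℝ => (Real.sqrt (4*Real.pi*b*t))⁻¹ * (Real.exp (-(ξ - x₀ - a*t)^2/(4*b*t)) * (-(ξ - x₀ - a*t)/(2*b*t))) + (Real.sqrt (4*Real.pi*b*t))⁻¹ * (Real.exp (-(a/b)*x₀ - (ξ + x₀ - a*t)^2/(4*b*t)) * (-((ξ + x₀ - a*t)/(2*b*t)))) - (a/(2*b) * (Real.exp ((a/b)*ξ) * (a/b)) * (2/Real.sqrt Real.pi * (∫ y in Ioi ((ξ + x₀ + a*t)/Real.sqrt (4*b*t)), Real.exp (-y^2))) + a/(2*b) * Real.exp ((a/b)*ξ)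 * (2/Real.sqrt Real.pi * (-Real.exp (-((ξ + x₀ + a*t)/Real.sqrt (4*b*t))^2) * (1/Real.sqrt (4*b*t))))) :=
    funext fun ξ => (hFx ξ).deriv
  simp only [smolFund]
  rw [hT.deriv, (hFx x).deriv, hfeq, hFxx.deriv]
  have hS0 : Real.sqrt (4*b*t) ≠ 0 := ne_of_gt hS
  have hP0 : Real.sqrt (4*Real.pi*b*t) ≠ 0 := ne_of_gt hP
  have hQ0 : Real.sqrt Real.pi ≠ 0 := ne_of_gt hQ
  have ht0 : t ≠ 0 := ne_of_gt ht
  have hb0 : b ≠ 0 := ne_of_gt hb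
  field_simp
  ring
end

section
/- Let a ∈ ℝ, b > 0 and x₀ ≥ 0, and let ρ^F be the Smoluchowski fundamental solution on the half-line with these parameters. Then for every t > 0 the function x ↦ ρ^F(x,t) is integrable on (0,∞) and ∫₀^∞ ρ^F(x,t) dx = 1. -/
open MeasureTheory Set

open Filter Topology

noncomputable def gtail (z : ℝ) : ℝ := ∫ y in Ioi z, Real.exp (-y ^ 2)

lemma integrable_gauss : Integrable (fun y : ℝ => Real.exp (-y ^ 2)) := by
  simpa using integrable_exp_neg_mul_sq (by norm_num : (0:ℝ) < 1)

lemma gtail_nonneg (z : ℝ) : 0 ≤ gtail z :=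
  setIntegral_nonneg measurableSet_Ioi fun y _ => (Real.exp_pos _).le

lemma gtail_eq (w : ℝ) : gtail w = gtail 0 - ∫ y in (0:ℝ)..w, Real.exp (-y ^ 2) := by
  have h0 : (∫ y in Iic (0:ℝ), Real.exp (-y ^ 2)) + gtail 0 = ∫ y : ℝ, Real.exp (-y ^ 2) :=
    intervalIntegral.integral_Iic_add_Ioi integrable_gauss.integrableOn integrable_gauss.integrableOn
  have hw : (∫ y in Iic w, Real.exp (-y ^ 2)) + gtail w = ∫ y : ℝ, Real.exp (-y ^ 2) :=
    intervalIntegral.integral_Iic_add_Ioi integrable_gauss.integrableOn integrable_gauss.integrableOn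
  have hsub : (∫ y in Iic w, Real.exp (-y ^ 2)) - (∫ y in Iic (0:ℝ), Real.exp (-y ^ 2))
      = ∫ y in (0:ℝ)..w, Real.exp (-y ^ 2) :=
    intervalIntegral.integral_Iic_sub_Iic integrable_gauss.integrableOn integrable_gauss.integrableOn
  linarith

lemma gtail_hasDerivAt (z : ℝ) : HasDerivAt gtail (-Real.exp (-z ^ 2)) z := by
  have h : HasDerivAt (fun w => gtail 0 - ∫ y in (0:ℝ)..w, Real.exp (-y ^ 2))
      (-Real.exp (-z ^ 2)) z := by
    have := (intervalIntegral.integral_hasDerivAt_right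
      (integrable_gauss.intervalIntegrable (a := 0) (b := z))
      (integrable_gauss.aestronglyMeasurable.stronglyMeasurableAtFilter (l := nhds z))
      ((by continuity : Continuous fun y : ℝ => Real.exp (-y ^ 2)).continuousAt))
    simpa using this.const_sub (gtail 0)
  exact h.congr_of_eventuallyEq (Eventually.of_forall fun w => gtail_eq w)

lemma gtail_continuous : Continuous gtail :=
  Differentiable.continuous (fun z => (gtail_hasDerivAt z).differentiableAt)

lemma gtail_le {z : ℝ} (hz : 0 ≤ z) : gtail z ≤ Real.sqrt Real.pi * Real.exp (-z ^ 2) := by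
  have hpt : ∀ y ∈ Ioi z, Real.exp (-y ^ 2) ≤ Real.exp (-z ^ 2) * Real.exp (-(y - z) ^ 2) := by
    intro y hy
    rw [← Real.exp_add, Real.exp_le_exp]
    nlinarith [mem_Ioi.mp hy]
  have hint : IntegrableOn (fun y => Real.exp (-z ^ 2) * Real.exp (-(y - z) ^ 2)) (Ioi z) :=
    (((integrable_gauss).comp_sub_right z).const_mul _).integrableOn
  calc gtail z ≤ ∫ y in Ioi z, Real.exp (-z ^ 2) * Real.exp (-(y - z) ^ 2) := by
        exact setIntegral_mono_on integrable_gauss.integrableOn hint measurableSet_Ioi hpt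
    _ ≤ ∫ y : ℝ, Real.exp (-z ^ 2) * Real.exp (-(y - z) ^ 2) := by
        exact setIntegral_le_integral (((integrable_gauss).comp_sub_right z).const_mul _)
          (Eventually.of_forall fun y => by positivity)
    _ = Real.exp (-z ^ 2) * ∫ y : ℝ, Real.exp (-(y - z) ^ 2) := by
        rw [integral_const_mul]
    _ = Real.exp (-z ^ 2) * Real.sqrt Real.pi := by
        rw [integral_sub_right_eq_self (fun y : ℝ => Real.exp (-y ^ 2)) z]
        rw [show (fun y : ℝ => Real.exp (-y ^ 2)) = fun y : ℝ => Real.exp (-(1:ℝ) * y ^ 2) by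
          funext y; ring_nf]
        rw [integral_gaussian]; simp
    _ = Real.sqrt Real.pi * Real.exp (-z ^ 2) := mul_comm _ _

lemma gtail_add (w : ℝ) : gtail (-w) + gtail w = Real.sqrt Real.pi := by
  have h1 : gtail (-w) = ∫ y in Iic w, Real.exp (-y ^ 2) := by
    have := integral_comp_neg_Ioi (-w) (fun y : ℝ => Real.exp (-y ^ 2))
    simp only [neg_neg, neg_sq] at this
    simpa [gtail] using this
  have h3 := intervalIntegral.integral_Iic_add_Ioi (f := fun y : ℝ => Real.exp (-y ^ 2)) (b := w)
    integrable_gauss.integrableOn integrable_gauss.integrableOn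
  have h2 : gtail w = ∫ y in Ioi w, Real.exp (-y ^ 2) := rfl
  rw [h1, h2]
  rw [h3]
  rw [show (fun y : ℝ => Real.exp (-y ^ 2)) = fun y : ℝ => Real.exp (-(1:ℝ) * y ^ 2) by
    funext y; ring_nf]
  rw [integral_gaussian]; simp

lemma exp_neg_sq_tendsto : Tendsto (fun z : ℝ => Real.exp (-z ^ 2)) atTop (𝓝 0) := by
  have h1 : Tendsto (fun z : ℝ => -z ^ 2) atTop atBot :=
    tendsto_neg_atTop_atBot.comp (tendsto_pow_atTop two_ne_zero)
  exact Real.tendsto_exp_atBot.comp h1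

lemma gtail_tendsto : Tendsto gtail atTop (𝓝 0) := by
  refine tendsto_of_tendsto_of_tendsto_of_le_of_le' tendsto_const_nhds
    (by simpa using exp_neg_sq_tendsto.const_mul (Real.sqrt Real.pi)) ?_ ?_
  · exact Eventually.of_forall gtail_nonneg
  · filter_upwards [eventually_ge_atTop (0:ℝ)] with z hz using gtail_le hz

/-- The antiderivative `F` with `F' = -2 ρ`. -/
noncomputable def smolF (a b x₀ t : ℝ) (x : ℝ) : ℝ :=
  (2 / Real.sqrt Real.pi) * gtail ((x - x₀ - a * t) / Real.sqrt (4 * b * t))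
  + Real.exp (a / b * x) *
      ((2 / Real.sqrt Real.pi) * gtail ((x + x₀ + a * t) / Real.sqrt (4 * b * t)))

lemma sqrt_split (b t : ℝ) (hb : 0 < b) (ht : 0 < t) :
    Real.sqrt (4 * Real.pi * b * t) = Real.sqrt Real.pi * Real.sqrt (4 * b * t) := by
  rw [← Real.sqrt_mul Real.pi_pos.le]
  ring_nf

lemma smolF_hasDerivAt (a b x₀ t x : ℝ) (hb : 0 < b) (ht : 0 < t) :
    HasDerivAt (smolF a b x₀ t) (-2 * smolFund a b x₀ x t) x := by
  have hbt : (0:ℝ) < 4 * b * t := by positivity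
  set c := Real.sqrt (4 * b * t) with hcdef
  set sp := Real.sqrt Real.pi with hspdef
  have hc : 0 < c := Real.sqrt_pos.mpr hbt
  have hc2 : c ^ 2 = 4 * b * t := Real.sq_sqrt hbt.le
  have hsp : 0 < sp := Real.sqrt_pos.mpr Real.pi_pos
  have hu₁ : HasDerivAt (fun x : ℝ => (x - x₀ - a * t) / c) (1 / c) x := by
    have := (((hasDerivAt_id x).sub_const x₀).sub_const (a * t)).div_const c
    simpa [one_div] using this
  have hu₂ : HasDerivAt (fun x : ℝ => (x + x₀ + a * t) / c) (1 / c) x := by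
    have := (((hasDerivAt_id x).add_const x₀).add_const (a * t)).div_const c
    simpa [one_div] using this
  have h1 : HasDerivAt (fun x : ℝ => (2 / sp) * gtail ((x - x₀ - a * t) / c))
      ((2 / sp) * (-Real.exp (-((x - x₀ - a * t) / c) ^ 2) * (1 / c))) x :=
    ((gtail_hasDerivAt _).comp x hu₁).const_mul _
  have h2 : HasDerivAt (fun x : ℝ => (2 / sp) * gtail ((x + x₀ + a * t) / c))
      ((2 / sp) * (-Real.exp (-((x + x₀ + a * t) / c) ^ 2) * (1 / c))) x :=
    ((gtail_hasDerivAt _).comp x hu₂).const_mul _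
  have hexp : HasDerivAt (fun x : ℝ => Real.exp (a / b * x))
      (Real.exp (a / b * x) * (a / b)) x := by
    simpa using ((hasDerivAt_id x).const_mul (a / b)).exp
  have hsum := h1.add (hexp.mul h2)
  have key : Real.exp (a / b * x) * Real.exp (-((x + x₀ + a * t) / c) ^ 2)
      = Real.exp (-(a / b) * x₀ - (x + x₀ - a * t) ^ 2 / (4 * b * t)) := by
    rw [← Real.exp_add]
    congr 1
    rw [div_pow, hc2]
    field_simp
    ring
  have gdef : ∀ z : ℝ, (∫ y in Ioi z, Real.exp (-y ^ 2)) = gtail z := fun z => rfl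
  refine (hsum : HasDerivAt (smolF a b x₀ t) _ x).congr_deriv ?_
  symm
  simp only [smolFund, sqrt_split b t hb ht, ← hcdef, ← hspdef, gdef]
  rw [show Real.exp (-(x - x₀ - a * t) ^ 2 / (4 * b * t))
      = Real.exp (-((x - x₀ - a * t) / c) ^ 2) by congr 1; rw [div_pow, hc2]; ring]
  rw [← key]
  field_simp
  ring

lemma smol_integrableOn (a b x₀ t : ℝ) (hb : 0 < b) (ht : 0 < t) :
    IntegrableOn (fun x => smolFund a b x₀ x t) (Ioi 0) := by
  have hbt : (0:ℝ) < 4 * b * t := by positivity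
  set c := Real.sqrt (4 * b * t) with hcdef
  set sp := Real.sqrt Real.pi with hspdef
  have hc : 0 < c := Real.sqrt_pos.mpr hbt
  have hc2 : c ^ 2 = 4 * b * t := Real.sq_sqrt hbt.le
  have hsp : 0 < sp := Real.sqrt_pos.mpr Real.pi_pos
  have gdef : ∀ z : ℝ, (∫ y in Ioi z, Real.exp (-y ^ 2)) = gtail z := fun z => rfl
  have base : Integrable (fun x : ℝ => Real.exp (-(4 * b * t)⁻¹ * x ^ 2)) :=
    integrable_exp_neg_mul_sq (by positivity)
  have I1 : Integrable (fun x : ℝ =>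
      (sp * c)⁻¹ * Real.exp (-(x - x₀ - a * t) ^ 2 / (4 * b * t))) := by
    have h := (base.comp_sub_right (x₀ + a * t)).const_mul ((sp * c)⁻¹)
    have e : ∀ x : ℝ, -(4 * b * t)⁻¹ * (x - (x₀ + a * t)) ^ 2
        = -(x - x₀ - a * t) ^ 2 / (4 * b * t) := fun x => by
      rw [div_eq_mul_inv]; ring
    exact h.congr (Eventually.of_forall fun x => by simp only []; rw [e x])
  have I2 : Integrable (fun x : ℝ =>
      (sp * c)⁻¹ * Real.exp (-(a / b) * x₀ - (x + x₀ - a * t) ^ 2 / (4 * b * t))) := by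
    have h := (base.comp_sub_right (a * t - x₀)).const_mul
      ((sp * c)⁻¹ * Real.exp (-(a / b) * x₀))
    have e : ∀ x : ℝ, -(a / b) * x₀ + -(4 * b * t)⁻¹ * (x - (a * t - x₀)) ^ 2
        = -(a / b) * x₀ - (x + x₀ - a * t) ^ 2 / (4 * b * t) := fun x => by
      rw [div_eq_mul_inv]; ring
    exact h.congr (Eventually.of_forall fun x => by
      simp only []
      rw [mul_assoc ((sp * c)⁻¹), ← Real.exp_add, e x])
  set M := max (0:ℝ) (-(x₀ + a * t)) with hMdef
  have hM0 : (0:ℝ) ≤ M := le_max_left _ _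
  have hM1 : -(x₀ + a * t) ≤ M := le_max_right _ _
  have cont3 : Continuous (fun x : ℝ =>
      a / (2 * b) * Real.exp (a / b * x) * ((2 / sp) * gtail ((x + x₀ + a * t) / c))) := by
    apply Continuous.mul
    · exact continuous_const.mul (Real.continuous_exp.comp (continuous_const.mul continuous_id))
    · exact continuous_const.mul (gtail_continuous.comp
        (((continuous_id.add continuous_const).add continuous_const).div_const _))
  have key : ∀ x : ℝ, Real.exp (a / b * x) * Real.exp (-((x + x₀ + a * t) / c) ^ 2)
      = Real.exp (-(a / b) * x₀) * Real.exp (-(4 * b * t)⁻¹ * (x - (a * t - x₀)) ^ 2) := by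
    intro x
    rw [← Real.exp_add, ← Real.exp_add]
    congr 1
    rw [div_pow, hc2]
    field_simp
    ring
  have p1 : IntegrableOn (fun x : ℝ =>
      a / (2 * b) * Real.exp (a / b * x) * ((2 / sp) * gtail ((x + x₀ + a * t) / c)))
      (Ioc 0 M) := cont3.integrableOn_Ioc
  have p2 : IntegrableOn (fun x : ℝ =>
      a / (2 * b) * Real.exp (a / b * x) * ((2 / sp) * gtail ((x + x₀ + a * t) / c)))
      (Ioi M) := by
    have dom : Integrable (fun x : ℝ => |a / (2 * b)| * 2 *
        (Real.exp (-(a / b) * x₀) * Real.exp (-(4 * b * t)⁻¹ * (x - (a * t - x₀)) ^ 2))) :=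
      ((base.comp_sub_right (a * t - x₀)).const_mul (Real.exp (-(a / b) * x₀))).const_mul _
    refine Integrable.mono' dom.integrableOn cont3.aestronglyMeasurable.restrict ?_
    rw [ae_restrict_iff' measurableSet_Ioi]
    refine Eventually.of_forall fun x hx => ?_
    have hxM : M < x := mem_Ioi.mp hx
    have hu : 0 ≤ (x + x₀ + a * t) / c := by
      apply div_nonneg _ hc.le
      linarith
    have hg := gtail_le hu
    have hgn := gtail_nonneg ((x + x₀ + a * t) / c)
    have hk := key x
    rw [Real.norm_eq_abs, abs_mul, abs_mul, abs_of_pos (Real.exp_pos _),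
      abs_of_nonneg (by positivity : (0:ℝ) ≤ (2 / sp) * gtail ((x + x₀ + a * t) / c))]
    have step1 : Real.exp (a / b * x) * ((2 / sp) * gtail ((x + x₀ + a * t) / c))
        ≤ Real.exp (a / b * x) * ((2 / sp) * (sp * Real.exp (-((x + x₀ + a * t) / c) ^ 2))) := by
      apply mul_le_mul_of_nonneg_left _ (Real.exp_pos _).le
      exact mul_le_mul_of_nonneg_left hg (by positivity)
    have step2 : Real.exp (a / b * x) * ((2 / sp) * (sp * Real.exp (-((x + x₀ + a * t) / c) ^ 2)))
        = 2 * (Real.exp (-(a / b) * x₀) * Real.exp (-(4 * b * t)⁻¹ * (x - (a * t - x₀)) ^ 2)) := by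
      rw [show Real.exp (a / b * x) * ((2 / sp) * (sp * Real.exp (-((x + x₀ + a * t) / c) ^ 2)))
          = (2 / sp * sp) * (Real.exp (a / b * x) * Real.exp (-((x + x₀ + a * t) / c) ^ 2)) by ring,
        hk]
      field_simp
    calc |a / (2 * b)| * Real.exp (a / b * x) *
          ((2 / sp) * gtail ((x + x₀ + a * t) / c))
        = |a / (2 * b)| * (Real.exp (a / b * x) * ((2 / sp) * gtail ((x + x₀ + a * t) / c))) := by
          ring
      _ ≤ |a / (2 * b)| * (2 * (Real.exp (-(a / b) * x₀) *
            Real.exp (-(4 * b * t)⁻¹ * (x - (a * t - x₀)) ^ 2))) := by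
          apply mul_le_mul_of_nonneg_left _ (abs_nonneg _)
          rw [← step2]; exact step1
      _ = |a / (2 * b)| * 2 * (Real.exp (-(a / b) * x₀) *
            Real.exp (-(4 * b * t)⁻¹ * (x - (a * t - x₀)) ^ 2)) := by ring
  have I3 : IntegrableOn (fun x : ℝ =>
      a / (2 * b) * Real.exp (a / b * x) * ((2 / sp) * gtail ((x + x₀ + a * t) / c)))
      (Ioi 0) := by
    have h := p1.union p2
    rwa [Ioc_union_Ioi_eq_Ioi hM0] at h
  have heq : (fun x => smolFund a b x₀ x t) = fun x : ℝ =>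
      ((sp * c)⁻¹ * Real.exp (-(x - x₀ - a * t) ^ 2 / (4 * b * t))
        + (sp * c)⁻¹ * Real.exp (-(a / b) * x₀ - (x + x₀ - a * t) ^ 2 / (4 * b * t)))
      - a / (2 * b) * Real.exp (a / b * x) * ((2 / sp) * gtail ((x + x₀ + a * t) / c)) := by
    funext x
    simp only [smolFund, sqrt_split b t hb ht, ← hcdef, ← hspdef, gdef]
  rw [heq]
  exact (I1.integrableOn.add I2.integrableOn).sub I3

lemma smolF_tendsto (a b x₀ t : ℝ) (hb : 0 < b) (ht : 0 < t) :
    Tendsto (smolF a b x₀ t) atTop (𝓝 0) := by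
  have hbt : (0:ℝ) < 4 * b * t := by positivity
  set c := Real.sqrt (4 * b * t) with hcdef
  set sp := Real.sqrt Real.pi with hspdef
  have hc : 0 < c := Real.sqrt_pos.mpr hbt
  have hc2 : c ^ 2 = 4 * b * t := Real.sq_sqrt hbt.le
  have hsp : 0 < sp := Real.sqrt_pos.mpr Real.pi_pos
  have key : ∀ x : ℝ, Real.exp (a / b * x) * Real.exp (-((x + x₀ + a * t) / c) ^ 2)
      = Real.exp (-(a / b) * x₀) * Real.exp (-(4 * b * t)⁻¹ * (x - (a * t - x₀)) ^ 2) := by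
    intro x
    rw [← Real.exp_add, ← Real.exp_add]
    congr 1
    rw [div_pow, hc2]
    field_simp
    ring
  have hA : Tendsto (fun x : ℝ => (2 / sp) * gtail ((x - x₀ - a * t) / c)) atTop (𝓝 0) := by
    have harg : Tendsto (fun x : ℝ => (x - x₀ - a * t) / c) atTop atTop := by
      apply Tendsto.atTop_div_const hc
      exact (tendsto_atTop_add_const_right atTop (-x₀ - a * t) tendsto_id).congr
        (fun x => by simp only [id_eq]; ring)
    simpa using (gtail_tendsto.comp harg).const_mul (2 / sp)
  have hB : Tendsto (fun x : ℝ =>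
      Real.exp (a / b * x) * ((2 / sp) * gtail ((x + x₀ + a * t) / c))) atTop (𝓝 0) := by
    have hbound : Tendsto (fun x : ℝ => 2 * (Real.exp (-(a / b) * x₀) *
        Real.exp (-(4 * b * t)⁻¹ * (x - (a * t - x₀)) ^ 2))) atTop (𝓝 0) := by
      have hexp : Tendsto (fun x : ℝ => Real.exp (-(4 * b * t)⁻¹ * (x - (a * t - x₀)) ^ 2))
          atTop (𝓝 0) := by
        have h2 : Tendsto (fun x : ℝ => x - (a * t - x₀)) atTop atTop :=
          (tendsto_atTop_add_const_right atTop (-(a * t - x₀)) tendsto_id).congr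
            (fun x => by simp only [id_eq]; ring)
        have h3 : Tendsto (fun x : ℝ => (x - (a * t - x₀)) ^ 2) atTop atTop :=
          (tendsto_pow_atTop two_ne_zero).comp h2
        have harg : Tendsto (fun x : ℝ => -(4 * b * t)⁻¹ * (x - (a * t - x₀)) ^ 2) atTop atBot :=
          h3.const_mul_atTop_of_neg (neg_lt_zero.mpr (by positivity))
        exact Real.tendsto_exp_atBot.comp harg
      simpa using (hexp.const_mul (Real.exp (-(a / b) * x₀))).const_mul 2
    refine tendsto_of_tendsto_of_tendsto_of_le_of_le' tendsto_const_nhds hbound ?_ ?_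
    · refine Eventually.of_forall fun x => ?_
      have := gtail_nonneg ((x + x₀ + a * t) / c)
      positivity
    · filter_upwards [eventually_ge_atTop (-(x₀ + a * t))] with x hx
      have hu : 0 ≤ (x + x₀ + a * t) / c := by
        apply div_nonneg _ hc.le
        linarith
      have hg := gtail_le hu
      have step : Real.exp (a / b * x) * ((2 / sp) * gtail ((x + x₀ + a * t) / c))
          ≤ Real.exp (a / b * x) * ((2 / sp) * (sp * Real.exp (-((x + x₀ + a * t) / c) ^ 2))) := by
        apply mul_le_mul_of_nonneg_left _ (Real.exp_pos _).le
        exact mul_le_mul_of_nonneg_left hg (by positivity)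
      calc Real.exp (a / b * x) * ((2 / sp) * gtail ((x + x₀ + a * t) / c))
          ≤ Real.exp (a / b * x) * ((2 / sp) * (sp * Real.exp (-((x + x₀ + a * t) / c) ^ 2))) :=
            step
        _ = 2 * (Real.exp (-(a / b) * x₀) *
              Real.exp (-(4 * b * t)⁻¹ * (x - (a * t - x₀)) ^ 2)) := by
            rw [show Real.exp (a / b * x) * ((2 / sp) * (sp *
                Real.exp (-((x + x₀ + a * t) / c) ^ 2)))
                = (2 / sp * sp) * (Real.exp (a / b * x) *
                  Real.exp (-((x + x₀ + a * t) / c) ^ 2)) by ring, key x]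
            field_simp
  have := hA.add hB
  rw [add_zero] at this
  exact this

/-- For every `t > 0` the Smoluchowski fundamental solution is an integrable
probability density on `(0,∞)`: its total mass is one. -/
theorem stmt_8 (a b x₀ : ℝ) (hb : 0 < b) (hx₀ : 0 ≤ x₀) :
    ∀ t > (0:ℝ),
      IntegrableOn (fun x => smolFund a b x₀ x t) (Ioi 0) ∧
      (∫ x in Ioi (0:ℝ), smolFund a b x₀ x t) = 1 := by
  intro t ht
  have hbt : (0:ℝ) < 4 * b * t := by positivity
  have hsp : 0 < Real.sqrt Real.pi := Real.sqrt_pos.mpr Real.pi_pos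
  have hint := smol_integrableOn a b x₀ t hb ht
  refine ⟨hint, ?_⟩
  have hderiv : ∀ x ∈ Ioi (0:ℝ), HasDerivAt (smolF a b x₀ t) (-2 * smolFund a b x₀ x t) x :=
    fun x _ => smolF_hasDerivAt a b x₀ t x hb ht
  have hcont : ContinuousWithinAt (smolF a b x₀ t) (Ici 0) 0 :=
    (smolF_hasDerivAt a b x₀ t 0 hb ht).continuousAt.continuousWithinAt
  have hint2 : IntegrableOn (fun x => -2 * smolFund a b x₀ x t) (Ioi 0) :=
    hint.const_mul (-2)
  have hFTC := integral_Ioi_of_hasDerivAt_of_tendsto hcont hderiv hint2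
    (smolF_tendsto a b x₀ t hb ht)
  rw [MeasureTheory.integral_const_mul] at hFTC
  have hF0 : smolF a b x₀ t 0 = 2 := by
    have e1 : ((0:ℝ) - x₀ - a * t) / Real.sqrt (4 * b * t)
        = -((x₀ + a * t) / Real.sqrt (4 * b * t)) := by ring
    have e2 : ((0:ℝ) + x₀ + a * t) / Real.sqrt (4 * b * t)
        = (x₀ + a * t) / Real.sqrt (4 * b * t) := by ring
    have hadd := gtail_add ((x₀ + a * t) / Real.sqrt (4 * b * t))
    simp only [smolF, e1, e2, mul_zero, Real.exp_zero, one_mul]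
    rw [show (2 / Real.sqrt Real.pi) * gtail (-((x₀ + a * t) / Real.sqrt (4 * b * t)))
        + (2 / Real.sqrt Real.pi) * gtail ((x₀ + a * t) / Real.sqrt (4 * b * t))
        = (2 / Real.sqrt Real.pi) * (gtail (-((x₀ + a * t) / Real.sqrt (4 * b * t)))
          + gtail ((x₀ + a * t) / Real.sqrt (4 * b * t))) from by ring, hadd]
    field_simp
  rw [hF0] at hFTC
  linarith
end
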